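/- Let G_t denote the two-dimensional wave kernel, G_t(x) := (2π)^{−1} (t² − |x|²)^{−1/2} · 1_{|x|<t} for t ≥ 0, x ∈ ℝ². Then there exists a constant C > 0 such that for all 0 ≤ s < t ≤ 1, one has ‖G_t − G_s‖_{L¹(ℝ²)} ≤ C · |t − s|^{1/2}. -/

import Mathlib

open MeasureTheory ENNReal

noncomputable section

/-- `ℝ²` with the Euclidean norm. -/
abbrev E2 := EuclideanSpace ℝ (Fin 2)

/-- Two-dimensional wave kernel `G_t(x) = (2π)⁻¹ (t² - |x|²)^{-1/2} · 1_{|x|<t}`. -/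
def G2 (t : ℝ) (x : E2) : ℝ :=
  if ‖x‖ < t then (2 * Real.pi)⁻¹ * (t ^ 2 - ‖x‖ ^ 2) ^ (-(1 : ℝ) / 2) else 0

open Set intervalIntegral


lemma vol_ball_E2 : (volume (Metric.ball (0:E2) 1)) = ENNReal.ofReal Real.pi := by
  rw [EuclideanSpace.volume_ball]
  simp only [Fintype.card_fin]
  rw [show ((2:ℕ):ℝ)/2 + 1 = 2 by norm_num, Real.Gamma_two, Real.sq_sqrt Real.pi_nonneg]
  simp

lemma lintegral_norm_E2 (f : ℝ → ℝ≥0∞) (hf : Measurable f) :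
    ∫⁻ x : E2, f ‖x‖ = (2 * ENNReal.ofReal Real.pi) * ∫⁻ r in Ioi (0:ℝ), ENNReal.ofReal r * f r := by
  calc ∫⁻ x : E2, f ‖x‖
      = ∫⁻ x : ({(0:E2)}ᶜ : Set E2), f ‖x.1‖ ∂((volume : Measure E2).comap (↑)) := by
        rw [lintegral_subtype_comap (measurableSet_singleton _).compl (fun x => f ‖x‖),
          restrict_compl_singleton]
    _ = ∫⁻ p : Metric.sphere (0:E2) 1 × Ioi (0:ℝ), f p.2.1
          ∂((volume : Measure E2).toSphere.prod (Measure.volumeIoiPow (Module.finrank ℝ E2 - 1))) :=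
        by convert ((Measure.measurePreserving_homeomorphUnitSphereProd (volume : Measure E2)).lintegral_comp_emb
          (Homeomorph.measurableEmbedding _) ((f ∘ Subtype.val) ∘ Prod.snd)) using 3 with x <;> simp
    _ = ∫⁻ _x : Metric.sphere (0:E2) 1, ∫⁻ y : Ioi (0:ℝ), f y.1
          ∂(Measure.volumeIoiPow (Module.finrank ℝ E2 - 1)) ∂(volume : Measure E2).toSphere :=
        lintegral_prod _ (by fun_prop)
    _ = (volume : Measure E2).toSphere univ * ∫⁻ y : Ioi (0:ℝ), f y.1
          ∂(Measure.volumeIoiPow (Module.finrank ℝ E2 - 1)) := by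
        rw [lintegral_const, mul_comm]
    _ = (2 * ENNReal.ofReal Real.pi) * ∫⁻ r in Ioi (0:ℝ), ENNReal.ofReal r * f r := by
        rw [show Module.finrank ℝ E2 - 1 = 1 by simp [finrank_euclideanSpace]]
        rw [Measure.volumeIoiPow]
        rw [lintegral_withDensity_eq_lintegral_mul _ (by fun_prop : Measurable fun r : Ioi (0:ℝ) => ENNReal.ofReal (r.1 ^ 1)) (by fun_prop)]
        simp only [Pi.mul_apply]
        rw [lintegral_subtype_comap measurableSet_Ioi (fun r : ℝ => ENNReal.ofReal (r^1) * f r)]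
        congr 1
        · rw [Measure.toSphere_apply_univ, vol_ball_E2]
          norm_num [finrank_euclideanSpace]
        · apply lintegral_congr; intro r; simp [Pi.mul_apply]


lemma key_integrable {b p q : ℝ} (h0p : 0 ≤ p) (hpq : p ≤ q) (hqb : q ≤ b) :
    IntervalIntegrable (fun y => y * (b^2 - y^2) ^ (-(1:ℝ)/2)) volume p q := by
  rcases eq_or_lt_of_le hpq with rfl | hpq
  · exact IntervalIntegrable.refl
  have hb : 0 < b := lt_of_lt_of_le (h0p.trans_lt hpq) hqb
  rw [intervalIntegrable_iff_integrableOn_Ioc_of_le hpq.le]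
  have hg : IntegrableOn (fun y => (b * b ^ (-(1:ℝ)/2)) * (b - y) ^ (-(1:ℝ)/2)) (Ioc p q) volume := by
    have h1 : IntervalIntegrable (fun y => (b - y) ^ (-(1:ℝ)/2)) volume p q := by
      have := (intervalIntegral.intervalIntegrable_rpow' (r := -(1:ℝ)/2) (a := b - p) (b := b - q)
        (by norm_num)).comp_sub_left b
      simpa using this
    rw [intervalIntegrable_iff_integrableOn_Ioc_of_le hpq.le] at h1
    exact h1.const_mul _
  apply hg.integrable.mono
  · apply Measurable.aestronglyMeasurable
    fun_prop
  · filter_upwards [ae_restrict_mem measurableSet_Ioc] with y hy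
    have hy0 : 0 < y := lt_of_le_of_lt h0p hy.1
    have hyb : y ≤ b := hy.2.trans hqb
    rw [Real.norm_eq_abs, Real.norm_eq_abs]
    have hnn : 0 ≤ y * (b^2 - y^2) ^ (-(1:ℝ)/2) := by
      apply mul_nonneg hy0.le
      exact Real.rpow_nonneg (by nlinarith) _
    rw [abs_of_nonneg hnn, abs_of_nonneg (mul_nonneg (by positivity) (Real.rpow_nonneg (by linarith) _))]
    rcases eq_or_lt_of_le hyb with rfl | hyb'
    · simp [show y^2 - y^2 = 0 by ring, sub_self, Real.zero_rpow (by norm_num : (-(1:ℝ)/2) ≠ 0)]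
    · have h2 : (b^2 - y^2) ^ (-(1:ℝ)/2) ≤ ((b - y) * b) ^ (-(1:ℝ)/2) := by
        apply Real.rpow_le_rpow_of_nonpos (mul_pos (by linarith) hb) (by nlinarith) (by norm_num)
      calc y * (b^2 - y^2) ^ (-(1:ℝ)/2) ≤ b * (((b-y) * b) ^ (-(1:ℝ)/2)) := by
            apply mul_le_mul hyb h2 (Real.rpow_nonneg (by nlinarith) _) hb.le
        _ = (b * b ^ (-(1:ℝ)/2)) * (b - y) ^ (-(1:ℝ)/2) := by
            rw [Real.mul_rpow (by linarith) hb.le]; ring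

lemma key_integral {b p q : ℝ} (h0p : 0 ≤ p) (hpq : p ≤ q) (hqb : q ≤ b) :
    ∫ y in p..q, y * (b^2 - y^2) ^ (-(1:ℝ)/2) =
      Real.sqrt (b^2 - p^2) - Real.sqrt (b^2 - q^2) := by
  have hcont : ContinuousOn (fun y => -Real.sqrt (b^2 - y^2)) (Icc p q) := by fun_prop
  have hderiv : ∀ y ∈ Ioo p q, HasDerivAt (fun y => -Real.sqrt (b^2 - y^2))
      (y * (b^2 - y^2) ^ (-(1:ℝ)/2)) y := by
    intro y hy
    have hy0 : 0 < y := lt_of_le_of_lt h0p hy.1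
    have hyb : y < b := lt_of_lt_of_le hy.2 hqb
    have hpos : 0 < b^2 - y^2 := by nlinarith
    have h1 : HasDerivAt (fun y : ℝ => b^2 - y^2) (-(2*y)) y := by
      simpa using ((hasDerivAt_pow 2 y).const_sub (b^2))
    have h2 := (Real.hasDerivAt_sqrt hpos.ne').comp y h1
    have h3 := h2.neg
    convert h3 using 1
    case e'_4 => rfl
    case e'_5 => rfl
    case e'_8 => rfl
    have hsne : Real.sqrt (b^2 - y^2) ≠ 0 := by positivity
    rw [show (-(1:ℝ))/2 = -(1/2) by norm_num, Real.rpow_neg hpos.le, ← Real.sqrt_eq_rpow]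
    field_simp
  have := intervalIntegral.integral_eq_sub_of_hasDeriv_right_of_le hpq hcont
    (fun y hy => (hderiv y hy).hasDerivWithinAt) (key_integrable h0p hpq hqb)
  rw [this]; ring

/-- `L¹` Hölder-in-time estimate for the 2d wave kernel. -/
theorem stmt10 :
    ∃ C : ℝ, 0 < C ∧
      ∀ s t : ℝ, 0 ≤ s → s < t → t ≤ 1 →
        ∫⁻ x : E2, ENNReal.ofReal |G2 t x - G2 s x| ≤
          ENNReal.ofReal (C * (t - s) ^ ((1 : ℝ) / 2)) := by
  refine ⟨3, by norm_num, fun s t hs hst ht1 => ?_⟩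
  have ht0 : 0 < t := lt_of_le_of_lt hs hst
  have hcpos : 0 < (2 * Real.pi)⁻¹ := by positivity
  set c : ℝ := (2 * Real.pi)⁻¹ with hc
  set F : ℝ → ℝ := fun r =>
    |(if r < t then c * (t ^ 2 - r ^ 2) ^ (-(1:ℝ) / 2) else 0) -
      (if r < s then c * (s ^ 2 - r ^ 2) ^ (-(1:ℝ) / 2) else 0)| with hF
  have hFmeas : Measurable fun r => ENNReal.ofReal (F r) := by
    apply Measurable.ennreal_ofReal
    apply Measurable.abs
    apply Measurable.sub <;>
    · apply Measurable.ite (measurableSet_lt measurable_id measurable_const) _ measurable_const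
      fun_prop
  have hstep : ∫⁻ x : E2, ENNReal.ofReal |G2 t x - G2 s x|
      = ∫⁻ x : E2, (fun r => ENNReal.ofReal (F r)) ‖x‖ :=
    lintegral_congr fun x => by rw [hF]; simp only [G2]; rfl
  rw [hstep, lintegral_norm_E2 _ hFmeas]
  -- integrability of the pieces
  have hint1 : IntegrableOn (fun r => c * (r * (s^2 - r^2) ^ (-(1:ℝ)/2))
      - c * (r * (t^2 - r^2) ^ (-(1:ℝ)/2))) (Ioo 0 s) volume := by
    apply IntegrableOn.mono_set _ Ioo_subset_Ioc_self
    have h1 := (key_integrable (b := s) le_rfl hs le_rfl).const_mul c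
    have h2 := (key_integrable (b := t) le_rfl hs (le_of_lt hst)).const_mul c
    rw [intervalIntegrable_iff_integrableOn_Ioc_of_le hs] at h1 h2
    exact h1.sub h2
  have hint2 : IntegrableOn (fun r => c * (r * (t^2 - r^2) ^ (-(1:ℝ)/2))) (Ioo s t) volume := by
    apply IntegrableOn.mono_set _ Ioo_subset_Ioc_self
    have h2 := (key_integrable (b := t) hs (le_of_lt hst) le_rfl).const_mul c
    rwa [intervalIntegrable_iff_integrableOn_Ioc_of_le (le_of_lt hst)] at h2
  -- piece 1
  have hIoo1 : ∫⁻ r in Ioo 0 s, ENNReal.ofReal r * ENNReal.ofReal (F r)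
      = ENNReal.ofReal (c * (s - t + Real.sqrt (t^2 - s^2))) := by
    rw [setLIntegral_congr_fun measurableSet_Ioo
      (g := fun r => ENNReal.ofReal (c * (r * (s^2 - r^2) ^ (-(1:ℝ)/2))
        - c * (r * (t^2 - r^2) ^ (-(1:ℝ)/2))))
      (fun r hr => by
        have hrs : r < s := hr.2
        have hrt : r < t := hrs.trans hst
        have h1 : (0:ℝ) < s^2 - r^2 := by nlinarith [hr.1]
        have hle : (t^2 - r^2) ^ (-(1:ℝ)/2) ≤ (s^2 - r^2) ^ (-(1:ℝ)/2) :=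
          Real.rpow_le_rpow_of_nonpos h1 (by nlinarith) (by norm_num)
        rw [hF]
        simp only [if_pos hrs, if_pos hrt]
        rw [abs_of_nonpos (by nlinarith), ← ENNReal.ofReal_mul (le_of_lt hr.1)]
        congr 1
        ring)]
    rw [← ofReal_integral_eq_lintegral_ofReal hint1 ?_]
    · congr 1
      rw [← integral_Ioc_eq_integral_Ioo, ← intervalIntegral.integral_of_le hs]
      rw [intervalIntegral.integral_sub
        ((key_integrable (b := s) le_rfl hs le_rfl).const_mul c)
        ((key_integrable (b := t) le_rfl hs (le_of_lt hst)).const_mul c),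
        intervalIntegral.integral_const_mul, intervalIntegral.integral_const_mul,
        key_integral le_rfl hs le_rfl, key_integral le_rfl hs (le_of_lt hst)]
      have e1 : Real.sqrt (s^2 - 0^2) = s := by norm_num [Real.sqrt_sq hs]
      have e2 : Real.sqrt (s^2 - s^2) = 0 := by simp
      have e3 : Real.sqrt (t^2 - 0^2) = t := by norm_num [Real.sqrt_sq ht0.le]
      rw [e1, e2, e3]
      ring
    · filter_upwards [ae_restrict_mem measurableSet_Ioo] with r hr
      have h1 : (0:ℝ) < s^2 - r^2 := by nlinarith [hr.1, hr.2]
      have hle : (t^2 - r^2) ^ (-(1:ℝ)/2) ≤ (s^2 - r^2) ^ (-(1:ℝ)/2) :=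
        Real.rpow_le_rpow_of_nonpos h1 (by nlinarith [hr.2]) (by norm_num)
      simp only [Pi.zero_apply]
      nlinarith [mul_le_mul_of_nonneg_left hle (le_of_lt hr.1), hcpos]
  -- piece 2
  have hIoo2 : ∫⁻ r in Ioo s t, ENNReal.ofReal r * ENNReal.ofReal (F r)
      = ENNReal.ofReal (c * Real.sqrt (t^2 - s^2)) := by
    rw [setLIntegral_congr_fun measurableSet_Ioo
      (g := fun r => ENNReal.ofReal (c * (r * (t^2 - r^2) ^ (-(1:ℝ)/2))))
      (fun r hr => by
        have hr0 : (0:ℝ) < r := hs.trans_lt hr.1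
        have h1 : (0:ℝ) < t^2 - r^2 := by nlinarith [hr.2]
        have h2 := Real.rpow_nonneg h1.le (-(1:ℝ)/2)
        rw [hF]
        simp only [if_pos hr.2, if_neg (not_lt.2 (le_of_lt hr.1)), sub_zero]
        rw [abs_of_nonneg (by positivity), ← ENNReal.ofReal_mul hr0.le]
        congr 1
        ring)]
    rw [← ofReal_integral_eq_lintegral_ofReal hint2 ?_]
    · congr 1
      rw [← integral_Ioc_eq_integral_Ioo, ← intervalIntegral.integral_of_le (le_of_lt hst),
        intervalIntegral.integral_const_mul, key_integral hs (le_of_lt hst) le_rfl,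
        sub_self, Real.sqrt_zero, sub_zero]
    · filter_upwards [ae_restrict_mem measurableSet_Ioo] with r hr
      have h1 : (0:ℝ) < t^2 - r^2 := by nlinarith [hr.1, hr.2, hs.trans_lt hr.1]
      have hr0 : (0:ℝ) < r := hs.trans_lt hr.1
      have h2 := Real.rpow_nonneg h1.le (-(1:ℝ)/2)
      simp only [Pi.zero_apply]
      positivity
  -- piece 3
  have hIci : ∫⁻ r in Ici t, ENNReal.ofReal r * ENNReal.ofReal (F r) = 0 := by
    rw [setLIntegral_congr_fun measurableSet_Ici (g := fun _ => 0)
      (fun r hr => by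
        have h1 : ¬ (r < t) := not_lt.2 hr
        have h2 : ¬ (r < s) := not_lt.2 ((le_of_lt hst).trans hr)
        rw [hF]
        simp [h1, h2]), lintegral_zero]
  -- split
  have hsplit : ∫⁻ r in Ioi (0:ℝ), ENNReal.ofReal r * ENNReal.ofReal (F r)
      ≤ ENNReal.ofReal (c * (s - t + Real.sqrt (t^2 - s^2)))
        + ENNReal.ofReal (c * Real.sqrt (t^2 - s^2)) := by
    calc ∫⁻ r in Ioi (0:ℝ), ENNReal.ofReal r * ENNReal.ofReal (F r)
        ≤ ∫⁻ r in Ioo 0 s ∪ (Ico s t ∪ Ici t), ENNReal.ofReal r * ENNReal.ofReal (F r) := by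
          apply lintegral_mono_set
          intro r hr
          rcases lt_or_ge r s with h | h
          · exact Or.inl ⟨hr, h⟩
          · rcases lt_or_ge r t with h' | h'
            · exact Or.inr (Or.inl ⟨h, h'⟩)
            · exact Or.inr (Or.inr h')
      _ ≤ (∫⁻ r in Ioo 0 s, ENNReal.ofReal r * ENNReal.ofReal (F r))
          + ((∫⁻ r in Ico s t, ENNReal.ofReal r * ENNReal.ofReal (F r))
            + ∫⁻ r in Ici t, ENNReal.ofReal r * ENNReal.ofReal (F r)) :=
          le_trans (lintegral_union_le _ _ _) (by gcongr; exact lintegral_union_le _ _ _)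
      _ = _ := by
          rw [Measure.restrict_congr_set Ioo_ae_eq_Ico.symm, hIoo1, hIoo2, hIci, add_zero]
  calc (2 * ENNReal.ofReal Real.pi) * ∫⁻ r in Ioi (0:ℝ), ENNReal.ofReal r * ENNReal.ofReal (F r)
      ≤ (2 * ENNReal.ofReal Real.pi) *
        (ENNReal.ofReal (c * (s - t + Real.sqrt (t^2 - s^2)))
          + ENNReal.ofReal (c * Real.sqrt (t^2 - s^2))) := by gcongr
    _ = ENNReal.ofReal ((2 * Real.pi) * (c * ((s - t + Real.sqrt (t^2 - s^2)) + Real.sqrt (t^2 - s^2)))) := by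
        have h1 : t - s ≤ Real.sqrt (t^2 - s^2) := by
          rw [show t^2 - s^2 = (t-s)*(t+s) by ring]
          calc t - s = Real.sqrt ((t-s)*(t-s)) :=
                (Real.sqrt_mul_self (by linarith)).symm
            _ ≤ Real.sqrt ((t-s)*(t+s)) := by
                apply Real.sqrt_le_sqrt; nlinarith
        have hA : 0 ≤ s - t + Real.sqrt (t^2 - s^2) := by linarith
        rw [← ENNReal.ofReal_add (by positivity) (by positivity),
          show (2:ℝ≥0∞) * ENNReal.ofReal Real.pi = ENNReal.ofReal (2 * Real.pi) by
            rw [ENNReal.ofReal_mul (by norm_num)]; norm_num,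
          ← ENNReal.ofReal_mul (by positivity)]
        congr 1
        ring
    _ ≤ ENNReal.ofReal (3 * (t - s) ^ ((1:ℝ)/2)) := by
        apply ENNReal.ofReal_le_ofReal
        rw [hc, show (2 * Real.pi) * ((2 * Real.pi)⁻¹ * ((s - t + Real.sqrt (t^2 - s^2)) + Real.sqrt (t^2 - s^2)))
            = (s - t + Real.sqrt (t^2 - s^2)) + Real.sqrt (t^2 - s^2) by
          field_simp]
        rw [← Real.sqrt_eq_rpow]
        have h2 : Real.sqrt (t^2 - s^2) ≤ Real.sqrt 2 * Real.sqrt (t - s) := by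
          rw [← Real.sqrt_mul (by norm_num)]
          apply Real.sqrt_le_sqrt
          nlinarith
        have h3 : Real.sqrt 2 ≤ 3/2 := by
          rw [show (3:ℝ)/2 = Real.sqrt ((3/2)^2) by rw [Real.sqrt_sq]; norm_num]
          apply Real.sqrt_le_sqrt; norm_num
        nlinarith [Real.sqrt_nonneg (t - s)]
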